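/- Let M, L be integers with 1 ≤ L ≤ M−1 and m = M−L+1 ≥ 2, and let μ ∈ ℝ. Define b ∈ ℂ^m by b_0 = −exp(iμ(M−1)/2), b_{m−1} = exp(−iμ(M−2L+1)/2), and b_k = 0 for 0 < k < m−1. Then Σ_{ℓ=1}^{L} Σ_{n=1}^{L} exp(iμ(n−ℓ)) · bᵀ (J_ℓ J_nᵀ) conj(b) = 2 · min{L, M−L}. -/

import Mathlib

open Matrix Complex

/-- Subarray selection matrix with (0-based) shift `ℓ`:
`(sel M L ℓ)_{p,q} = 1` iff `q = p + ℓ`.  The 1-based subarray selection matrix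
`J_ℓ = [0_{m×(ℓ-1)}, I_m, 0_{m×(L-ℓ)}]` with `m = M - L + 1` is `sel M L (ℓ - 1)`. -/
def sel (M L ℓ : ℕ) : Matrix (Fin (M - L + 1)) (Fin M) ℂ :=
  Matrix.of fun p q => if (q : ℕ) = (p : ℕ) + ℓ then 1 else 0

/-- The vector `b ∈ ℂ^m`, `m = M - L + 1`, with `b_0 = -exp(iμ(M-1)/2)`,
`b_{m-1} = exp(-iμ(M-2L+1)/2)` and all other entries zero. -/
noncomputable def bvec (M L : ℕ) (μ : ℝ) : Fin (M - L + 1) → ℂ :=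
  fun k =>
    if (k : ℕ) = 0 then -Complex.exp (Complex.I * (μ : ℂ) * ((((M : ℝ) - 1) / 2) : ℝ))
    else if (k : ℕ) = M - L + 1 - 1 then
      Complex.exp (-(Complex.I * (μ : ℂ) * ((((M : ℝ) - 2 * (L : ℝ) + 1) / 2) : ℝ)))
    else 0

lemma sel_entry (M L : ℕ) (hM : L < M) (ℓ n : ℕ) (hℓ : ℓ < L) (hn : n < L)
    (p q : Fin (M - L + 1)) :
    (sel M L ℓ * (sel M L n)ᵀ) p q = if (p : ℕ) + ℓ = (q : ℕ) + n then 1 else 0 := by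
  have hp : (p : ℕ) < M - L + 1 := p.isLt
  have hb : (p : ℕ) + ℓ < M := by omega
  rw [Matrix.mul_apply]
  simp only [sel, Matrix.transpose_apply, Matrix.of_apply, ite_mul, one_mul, zero_mul]
  by_cases h : (p : ℕ) + ℓ = (q : ℕ) + n
  · rw [if_pos h, Finset.sum_congr rfl (fun (r : Fin M) (_ : r ∈ Finset.univ) =>
      show (if (r:ℕ) = (p:ℕ) + ℓ then if (r:ℕ) = (q:ℕ) + n then (1:ℂ) else 0 else 0)
          = if r = ⟨(p:ℕ)+ℓ, hb⟩ then 1 else 0 from by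
        by_cases h1 : r = ⟨(p:ℕ)+ℓ, hb⟩ <;> simp_all [Fin.ext_iff] <;> omega)]
    simp
  · rw [if_neg h]
    apply Finset.sum_eq_zero
    intro r _
    split_ifs with h1 h2
    · omega
    · rfl
    · rfl

lemma two_point_sum {m : ℕ} (f : Fin m → ℂ) (i j : Fin m) (hij : i ≠ j)
    (h : ∀ k, k ≠ i → k ≠ j → f k = 0) : ∑ k, f k = f i + f j := by
  classical
  rw [← Finset.sum_subset (Finset.subset_univ ({i, j} : Finset (Fin m)))
    (fun x _ hx => by
      simp only [Finset.mem_insert, Finset.mem_singleton, not_or] at hx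
      exact h x hx.1 hx.2)]
  rw [Finset.sum_pair hij]

lemma pair (M L : ℕ) (hM : L < M) (hm : 1 ≤ M - L) (μ : ℝ) (ℓ n : Fin L) :
    Complex.exp (Complex.I * (μ : ℂ) * ((((n : Fin L) : ℝ) - ((ℓ : Fin L) : ℝ) : ℝ))) *
      (bvec M L μ ⬝ᵥ ((sel M L (ℓ : ℕ) * (sel M L (n : ℕ))ᵀ) *ᵥ
        fun i => (starRingEnd ℂ) (bvec M L μ i)))
    = (if (ℓ : ℕ) = (n : ℕ) then 2 else 0)
      + (if (ℓ : ℕ) = (M - L) + (n : ℕ) then -1 else 0)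
      + (if (M - L) + (ℓ : ℕ) = (n : ℕ) then -1 else 0) := by
  have hℓ := ℓ.isLt
  have hn := n.isLt
  set e0 : Fin (M - L + 1) := ⟨0, by omega⟩ with he0
  set e1 : Fin (M - L + 1) := ⟨M - L, by omega⟩ with he1
  have hne : e0 ≠ e1 := by simp [he0, he1, Fin.ext_iff]; omega
  -- expand dot product and mulVec
  rw [dotProduct, two_point_sum _ e0 e1 hne (fun k hk0 hk1 => by
    have : bvec M L μ k = 0 := by
      simp only [bvec]
      rw [if_neg, if_neg]
      · have := Fin.val_ne_of_ne hk0; have := Fin.val_ne_of_ne hk1; have : (e0:ℕ) = 0 := rfl; have : (e1:ℕ) = M - L := rfl; omega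
      · have := Fin.val_ne_of_ne hk0; have := Fin.val_ne_of_ne hk1; have : (e0:ℕ) = 0 := rfl; have : (e1:ℕ) = M - L := rfl; omega
    simp [this])]
  have hbz : ∀ k : Fin (M - L + 1), k ≠ e0 → k ≠ e1 → bvec M L μ k = 0 := by
    intro k hk0 hk1
    simp only [bvec]
    rw [if_neg, if_neg]
    · have := Fin.val_ne_of_ne hk0; have := Fin.val_ne_of_ne hk1; have : (e0:ℕ) = 0 := rfl; have : (e1:ℕ) = M - L := rfl; omega
    · have := Fin.val_ne_of_ne hk0; have := Fin.val_ne_of_ne hk1; have : (e0:ℕ) = 0 := rfl; have : (e1:ℕ) = M - L := rfl; omega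
  have inner : ∀ p : Fin (M - L + 1),
      (∑ q, (sel M L (ℓ:ℕ) * (sel M L (n:ℕ))ᵀ) p q * (starRingEnd ℂ) (bvec M L μ q))
      = (if (p : ℕ) + (ℓ:ℕ) = (n:ℕ) then 1 else 0) * (starRingEnd ℂ) (bvec M L μ e0)
        + (if (p : ℕ) + (ℓ:ℕ) = (M - L) + (n:ℕ) then 1 else 0) *
            (starRingEnd ℂ) (bvec M L μ e1) := by
    intro p
    rw [two_point_sum _ e0 e1 hne (fun k hk0 hk1 => by rw [hbz k hk0 hk1]; simp)]
    rw [sel_entry M L hM ℓ n hℓ hn p e0, sel_entry M L hM ℓ n hℓ hn p e1]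
    simp [he0, he1]
  simp only [Matrix.mulVec, dotProduct]
  rw [inner e0, inner e1]
  have hv0 : bvec M L μ e0 = -Complex.exp (Complex.I * (μ : ℂ) * ((((M : ℝ) - 1) / 2) : ℝ)) := by
    simp [bvec, he0]
  have hv1 : bvec M L μ e1 =
      Complex.exp (-(Complex.I * (μ : ℂ) * ((((M : ℝ) - 2 * (L : ℝ) + 1) / 2) : ℝ))) := by
    simp only [bvec, he1]
    rw [if_neg (by omega), if_pos (by omega)]
  rw [hv0, hv1]
  have h0 : (e0 : ℕ) = 0 := rfl
  have h1 : (e1 : ℕ) = M - L := rfl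
  rw [h0, h1]
  simp only [zero_add, add_right_inj, map_neg, ← Complex.exp_conj, _root_.map_mul,
    Complex.conj_I, Complex.conj_ofReal]
  have k1 : ∀ z : ℂ, Complex.exp z * Complex.exp (-z) = 1 := fun z => by
    rw [← Complex.exp_add, add_neg_cancel, Complex.exp_zero]
  have k2 : ∀ z : ℂ, Complex.exp (-z) * Complex.exp z = 1 := fun z => by
    rw [← Complex.exp_add, neg_add_cancel, Complex.exp_zero]
  have hexp0 : (1:ℂ) = Complex.exp 0 := Complex.exp_zero.symm
  split_ifs with c1 c2 c3 c3' c2' c3'' c3'''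
  · omega
  · omega
  · omega
  · -- diagonal case ℓ = n
    have hd : ((n:ℕ):ℝ) - ((ℓ:ℕ):ℝ) = 0 := by rw [c1]; ring
    simp only [hd, Complex.ofReal_zero, mul_zero, Complex.exp_zero, one_mul, zero_mul,
      mul_zero, add_zero, neg_zero, zero_add, mul_neg, neg_mul, neg_neg]
    rw [k1, k2]
    norm_num
  · omega
  · -- case ℓ = (M-L) + n
    have hcast : ((ℓ:ℕ):ℂ) = (M:ℂ) - (L:ℂ) + ((n:ℕ):ℂ) := by
      have c2 : (ℓ:ℕ) = M - L + (n:ℕ) := by assumption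
      rw [c2]; push_cast [hM.le]; ring
    simp only [one_mul, zero_mul, mul_zero, add_zero, neg_zero, zero_add, mul_neg, neg_mul, neg_neg]
    rw [← Complex.exp_add, ← Complex.exp_add]
    rw [show (-1:ℂ) = -Complex.exp 0 from by rw [Complex.exp_zero], neg_inj]
    congr 1
    push_cast
    linear_combination (-(Complex.I * (μ:ℂ))) * hcast
  · -- case (M-L) + ℓ = n
    have hcast : ((n:ℕ):ℂ) = (M:ℂ) - (L:ℂ) + ((ℓ:ℕ):ℂ) := by
      have c3 : M - L + (ℓ:ℕ) = (n:ℕ) := by assumption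
      have h := congrArg (Nat.cast : ℕ → ℂ) c3
      push_cast [Nat.cast_sub hM.le] at h
      linear_combination -h
    simp only [one_mul, zero_mul, mul_zero, add_zero, neg_zero, zero_add, mul_neg, neg_mul, neg_neg]
    rw [← Complex.exp_add, ← Complex.exp_add]
    rw [show (-1:ℂ) = -Complex.exp 0 from by rw [Complex.exp_zero], neg_inj]
    congr 1
    push_cast
    linear_combination (Complex.I * (μ:ℂ)) * hcast
  · simp

/-- The weighted quadratic form of the subarray selection matrices evaluated at the
boundary vector `b`: `Σ_{ℓ,n} exp(iμ(n-ℓ)) bᵀ (J_ℓ J_nᵀ) conj(b) = 2 min{L, M-L}`. -/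
theorem quadratic_form_boundary (M L : ℕ) (hL : 1 ≤ L) (hLM : L ≤ M - 1)
    (hm : 2 ≤ M - L + 1) (μ : ℝ) :
    (∑ ℓ : Fin L, ∑ n : Fin L,
        Complex.exp (Complex.I * (μ : ℂ) * (((n : ℝ) - (ℓ : ℝ)) : ℝ)) *
          (bvec M L μ ⬝ᵥ ((sel M L (ℓ : ℕ) * (sel M L (n : ℕ))ᵀ) *ᵥ
            fun i => (starRingEnd ℂ) (bvec M L μ i))))
      = 2 * ((min L (M - L) : ℕ) : ℂ) := by
  have hM : L < M := by omega
  have hm1 : 1 ≤ M - L := by omega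
  rw [Finset.sum_congr rfl (fun ℓ _ => Finset.sum_congr rfl
    (fun n _ => pair M L hM hm1 μ ℓ n))]
  have inner2 : ∀ ℓ : Fin L,
      (∑ n : Fin L, ((if (ℓ:ℕ) = (n:ℕ) then (2:ℂ) else 0)
        + (if (ℓ:ℕ) = M - L + (n:ℕ) then -1 else 0)
        + (if M - L + (ℓ:ℕ) = (n:ℕ) then -1 else 0)))
      = 2 + (if M - L ≤ (ℓ:ℕ) then -1 else 0) + (if M - L + (ℓ:ℕ) < L then -1 else 0) := by
    intro ℓ
    rw [Finset.sum_add_distrib, Finset.sum_add_distrib]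
    congr 1
    congr 1
    · rw [Finset.sum_eq_single ℓ]
      · rw [if_pos rfl]
      · intro b _ hb
        rw [if_neg (by simp [Fin.ext_iff] at hb ⊢; omega)]
      · simp
    · by_cases h : M - L ≤ (ℓ:ℕ)
      · rw [if_pos h, Finset.sum_eq_single (⟨(ℓ:ℕ) - (M - L), by omega⟩ : Fin L)]
        · rw [if_pos (by simp; omega)]
        · intro b _ hb
          rw [if_neg (by simp [Fin.ext_iff] at hb ⊢; omega)]
        · simp
      · rw [if_neg h]
        exact Finset.sum_eq_zero fun n _ => if_neg (by omega)
    · by_cases h : M - L + (ℓ:ℕ) < L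
      · rw [if_pos h, Finset.sum_eq_single (⟨M - L + (ℓ:ℕ), h⟩ : Fin L)]
        · rw [if_pos (by simp)]
        · intro b _ hb
          rw [if_neg (by simp [Fin.ext_iff] at hb ⊢; omega)]
        · simp
      · rw [if_neg h]
        exact Finset.sum_eq_zero fun n _ => if_neg (by
          intro hc
          exact h (hc ▸ n.isLt))
  rw [Finset.sum_congr rfl (fun ℓ _ => inner2 ℓ)]
  rw [Finset.sum_add_distrib, Finset.sum_add_distrib]
  have count1 : ∑ ℓ : Fin L, (if M - L ≤ (ℓ:ℕ) then (-1:ℂ) else 0)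
      = -(((L - (M - L) : ℕ)) : ℂ) := by
    rw [Fin.sum_univ_eq_sum_range (fun i => if M - L ≤ i then (-1:ℂ) else 0) L,
      Finset.sum_ite, Finset.sum_const, Finset.sum_const_zero, add_zero]
    have hfe : (Finset.range L).filter (fun i => M - L ≤ i) = Finset.Ico (min (M - L) L) L := by
      ext i; simp [Nat.lt_min]; omega
    rw [hfe, Nat.card_Ico, show L - min (M - L) L = L - (M - L) from by omega]
    simp [nsmul_eq_mul]
  have count2 : ∑ ℓ : Fin L, (if M - L + (ℓ:ℕ) < L then (-1:ℂ) else 0)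
      = -(((L - (M - L) : ℕ)) : ℂ) := by
    rw [Fin.sum_univ_eq_sum_range (fun i => if M - L + i < L then (-1:ℂ) else 0) L,
      Finset.sum_ite, Finset.sum_const, Finset.sum_const_zero, add_zero]
    have hfe : (Finset.range L).filter (fun i => M - L + i < L) = Finset.range (L - (M - L)) := by
      ext i; simp; omega
    rw [hfe, Finset.card_range]
    simp [nsmul_eq_mul]
  rw [count1, count2, Finset.sum_const, Finset.card_univ, Fintype.card_fin]
  rw [show min L (M - L) = L - (L - (M - L)) from by omega,
    Nat.cast_sub (Nat.sub_le L (M - L))]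
  rw [nsmul_eq_mul]
  ring
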